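/- The Robin-coupled variational problem — find (u,λ) ∈ V × Q with a(u,v) − b(λ,v) = ∫_γ ρ v_γ for all v ∈ V, and b(μ,u) + α c(λ,μ) = 0 for all μ ∈ Q, where c(λ,μ) = Σ_i ∫_γ λ_i μ_i and α > 0 — has a unique solution, and there is a constant C independent of α such that ‖u‖²_V + ‖λ‖²_Λ + α‖λ‖²_Q ≤ C‖ρ‖²_{L²(γ)}. -/

import Mathlib

open RealInnerProductSpace

/-- Sign-symmetric bound for a bilinear form from a one-sided bound. -/
lemma robin_abs_bilin_le {V W : Type*} [NormedAddCommGroup V] [NormedSpace ℝ V]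
    [NormedAddCommGroup W] [NormedSpace ℝ W]
    (a : V →ₗ[ℝ] W →ₗ[ℝ] ℝ) (c : ℝ) (h : ∀ u v, a u v ≤ c * ‖u‖ * ‖v‖) (u : V) (v : W) :
    |a u v| ≤ c * ‖u‖ * ‖v‖ := by
  refine abs_le.2 ⟨?_, h u v⟩
  have := h (-u) v
  simp only [map_neg, LinearMap.neg_apply, norm_neg] at this
  linarith

/-- Lax–Milgram existence. -/
lemma robin_lax_milgram_exists {E : Type*} [NormedAddCommGroup E] [InnerProductSpace ℝ E]
    [CompleteSpace E] {B : E →L[ℝ] E →L[ℝ] ℝ} (coercive : IsCoercive B) (f : E →L[ℝ] ℝ) :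
    ∃ x : E, ∀ w, B x w = f w := by
  refine ⟨coercive.continuousLinearEquivOfBilin.symm ((InnerProductSpace.toDual ℝ E).symm f),
    fun w => ?_⟩
  rw [← coercive.continuousLinearEquivOfBilin_apply, ContinuousLinearEquiv.apply_symm_apply,
    InnerProductSpace.toDual_symm_apply]

set_option maxHeartbeats 1600000 in
theorem stmt_13 {V Lam Q : Type*}
    [NormedAddCommGroup V] [InnerProductSpace ℝ V] [CompleteSpace V]
    [NormedAddCommGroup Lam] [NormedSpace ℝ Lam]
    [NormedAddCommGroup Q] [InnerProductSpace ℝ Q] [CompleteSpace Q]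
    (ι : Q →ₗ[ℝ] Lam) (hι : Function.Injective ι)
    (Cι : ℝ) (hCι : 0 < Cι) (hιb : ∀ q : Q, ‖ι q‖ ≤ Cι * ‖q‖)
    (a : V →ₗ[ℝ] V →ₗ[ℝ] ℝ) (b : Lam →ₗ[ℝ] V →ₗ[ℝ] ℝ)
    (α₁ α₂ β M : ℝ) (hα₁ : 0 < α₁) (hα₂ : 0 < α₂) (hβ : 0 < β) (hM : 0 < M)
    (ha_cont : ∀ u v : V, a u v ≤ α₁ * ‖u‖ * ‖v‖)
    (ha_coer : ∀ u : V, α₂ * ‖u‖ ^ 2 ≤ a u u)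
    (hb_cont : ∀ (μ : Lam) (v : V), b μ v ≤ M * ‖μ‖ * ‖v‖)
    (hb_infsup : ∀ μ : Lam, ∀ ε > 0, ∃ v : V, ‖v‖ ≤ 1 ∧ β * ‖μ‖ - ε ≤ b μ v) :
    ∃ C : ℝ, 0 < C ∧ ∀ α : ℝ, 0 < α → ∀ (F : V →L[ℝ] ℝ) (R : ℝ), ‖F‖ ≤ R →
      (∃! p : V × Q, (∀ v : V, a p.1 v - b (ι p.2) v = F v) ∧
          (∀ μ : Q, b (ι μ) p.1 + α * (inner ℝ p.2 μ : ℝ) = 0)) ∧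
      (∀ (u : V) (lam : Q),
        (∀ v : V, a u v - b (ι lam) v = F v) →
        (∀ μ : Q, b (ι μ) u + α * (inner ℝ lam μ : ℝ) = 0) →
        ‖u‖ ^ 2 + ‖ι lam‖ ^ 2 + α * ‖lam‖ ^ 2 ≤ C * R ^ 2) := by
  have habs_a := robin_abs_bilin_le a α₁ ha_cont
  have habs_b := robin_abs_bilin_le b M hb_cont
  refine ⟨1 / α₂ ^ 2 + ((α₁ / α₂ + 1) / β) ^ 2 + 1 / α₂, by positivity, fun α hα F R hFR => ?_⟩
  have hR : 0 ≤ R := le_trans (norm_nonneg F) hFR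
  have hα₁n : (0:ℝ) ≤ α₁ := hα₁.le
  have hαn : (0:ℝ) ≤ α := hα.le
  have hMn : (0:ℝ) ≤ M := hM.le
  have hCιn : (0:ℝ) ≤ Cι := hCι.le
  constructor
  · -- existence and uniqueness
    obtain ⟨u0, l0, keyV, keyQ⟩ : ∃ (u0 : V) (l0 : Q),
        (∀ v : V, a u0 v - b (ι l0) v = F v) ∧
        (∀ μ : Q, b (ι μ) u0 + α * (inner ℝ l0 μ : ℝ) = 0) := by
      set E := WithLp 2 (V × Q) with hE
      have hproj : ∀ x : E, ‖x.fst‖ ≤ ‖x‖ ∧ ‖x.snd‖ ≤ ‖x‖ := by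
        intro x
        have h := WithLp.prod_norm_sq_eq_of_L2 x
        constructor <;> nlinarith [norm_nonneg x, norm_nonneg x.fst, norm_nonneg x.snd,
          sq_nonneg (‖x‖ - ‖x.fst‖), sq_nonneg (‖x‖ - ‖x.snd‖)]
      let B₀ : E →ₗ[ℝ] E →ₗ[ℝ] ℝ := LinearMap.mk₂ ℝ
        (fun x y => a x.fst y.fst - b (ι x.snd) y.fst + b (ι y.snd) x.fst + α * ⟪x.snd, y.snd⟫)
        (by intro m₁ m₂ n
            have e1 : (m₁ + m₂).fst = m₁.fst + m₂.fst := rfl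
            have e2 : (m₁ + m₂).snd = m₁.snd + m₂.snd := rfl
            rw [e1, e2]
            simp only [map_add, LinearMap.add_apply, inner_add_left]
            ring)
        (by intro c m n
            have e1 : (c • m).fst = c • m.fst := rfl
            have e2 : (c • m).snd = c • m.snd := rfl
            rw [e1, e2]
            simp only [map_smul, LinearMap.smul_apply, real_inner_smul_left, smul_eq_mul]
            ring)
        (by intro m n₁ n₂
            have e1 : (n₁ + n₂).fst = n₁.fst + n₂.fst := rfl
            have e2 : (n₁ + n₂).snd = n₁.snd + n₂.snd := rfl
            rw [e1, e2]
            simp only [map_add, LinearMap.add_apply, inner_add_right]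
            ring)
        (by intro c m n
            have e1 : (c • n).fst = c • n.fst := rfl
            have e2 : (c • n).snd = c • n.snd := rfl
            rw [e1, e2]
            simp only [map_smul, LinearMap.smul_apply, real_inner_smul_right, smul_eq_mul]
            ring)
      have hbound : ∀ x y : E, ‖B₀ x y‖ ≤ (α₁ + M * Cι + M * Cι + α) * ‖x‖ * ‖y‖ := by
        intro x y
        obtain ⟨hx1, hx2⟩ := hproj x
        obtain ⟨hy1, hy2⟩ := hproj y
        have h1 : |a x.fst y.fst| ≤ α₁ * ‖x‖ * ‖y‖ :=
          calc |a x.fst y.fst| ≤ α₁ * ‖x.fst‖ * ‖y.fst‖ := habs_a _ _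
            _ ≤ α₁ * ‖x‖ * ‖y‖ := by gcongr
        have h2 : |b (ι x.snd) y.fst| ≤ M * Cι * (‖x‖ * ‖y‖) :=
          calc |b (ι x.snd) y.fst| ≤ M * ‖ι x.snd‖ * ‖y.fst‖ := habs_b _ _
            _ ≤ M * (Cι * ‖x.snd‖) * ‖y.fst‖ := by gcongr; exact hιb x.snd
            _ ≤ M * (Cι * ‖x‖) * ‖y‖ := by gcongr
            _ = M * Cι * (‖x‖ * ‖y‖) := by ring
        have h2' : |b (ι y.snd) x.fst| ≤ M * Cι * (‖x‖ * ‖y‖) :=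
          calc |b (ι y.snd) x.fst| ≤ M * ‖ι y.snd‖ * ‖x.fst‖ := habs_b _ _
            _ ≤ M * (Cι * ‖y.snd‖) * ‖x.fst‖ := by gcongr; exact hιb y.snd
            _ ≤ M * (Cι * ‖y‖) * ‖x‖ := by gcongr
            _ = M * Cι * (‖x‖ * ‖y‖) := by ring
        have h4 : |α * ⟪x.snd, y.snd⟫| ≤ α * (‖x‖ * ‖y‖) := by
          rw [abs_mul, abs_of_pos hα]
          calc α * |⟪x.snd, y.snd⟫| ≤ α * (‖x.snd‖ * ‖y.snd‖) := by
                gcongr; exact abs_real_inner_le_norm x.snd y.snd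
            _ ≤ α * (‖x‖ * ‖y‖) := by gcongr
        have hB : ‖B₀ x y‖ = |a x.fst y.fst - b (ι x.snd) y.fst + b (ι y.snd) x.fst + α * ⟪x.snd, y.snd⟫| := rfl
        rw [hB]
        calc |a x.fst y.fst - b (ι x.snd) y.fst + b (ι y.snd) x.fst + α * ⟪x.snd, y.snd⟫|
            ≤ |a x.fst y.fst - b (ι x.snd) y.fst + b (ι y.snd) x.fst| + |α * ⟪x.snd, y.snd⟫| := abs_add_le _ _
          _ ≤ |a x.fst y.fst - b (ι x.snd) y.fst| + |b (ι y.snd) x.fst| + |α * ⟪x.snd, y.snd⟫| := by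
              gcongr; exact abs_add_le _ _
          _ ≤ |a x.fst y.fst| + |b (ι x.snd) y.fst| + |b (ι y.snd) x.fst| + |α * ⟪x.snd, y.snd⟫| := by
              gcongr; exact abs_sub _ _
          _ ≤ α₁ * ‖x‖ * ‖y‖ + M * Cι * (‖x‖ * ‖y‖) + M * Cι * (‖x‖ * ‖y‖) + α * (‖x‖ * ‖y‖) := by
              gcongr
          _ = (α₁ + M * Cι + M * Cι + α) * ‖x‖ * ‖y‖ := by ring
      let B : E →L[ℝ] E →L[ℝ] ℝ := LinearMap.mkContinuous₂ B₀ _ hbound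
      have hBapp : ∀ x y : E,
          B x y = a x.fst y.fst - b (ι x.snd) y.fst + b (ι y.snd) x.fst + α * ⟪x.snd, y.snd⟫ := fun x y => rfl
      have hcoer : IsCoercive B := by
        refine ⟨min α₂ α, lt_min hα₂ hα, fun x => ?_⟩
        have h1 := ha_coer x.fst
        have h2 : (⟪x.snd, x.snd⟫ : ℝ) = ‖x.snd‖ ^ 2 := real_inner_self_eq_norm_sq x.snd
        have h3 := WithLp.prod_norm_sq_eq_of_L2 x
        rw [hBapp]
        have hmin1 : min α₂ α ≤ α₂ := min_le_left _ _
        have hmin2 : min α₂ α ≤ α := min_le_right _ _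
        nlinarith [norm_nonneg x.fst, norm_nonneg x.snd, sq_nonneg ‖x.fst‖, sq_nonneg ‖x.snd‖]
      let f : E →L[ℝ] ℝ := F.comp ((ContinuousLinearMap.fst ℝ V Q).comp
        (WithLp.prodContinuousLinearEquiv 2 ℝ V Q : E →L[ℝ] V × Q))
      have hfapp : ∀ w : E, f w = F w.fst := fun w => rfl
      obtain ⟨x, hx⟩ := robin_lax_milgram_exists hcoer f
      have key : ∀ w : E, a x.fst w.fst - b (ι x.snd) w.fst + b (ι w.snd) x.fst + α * ⟪x.snd, w.snd⟫ = F w.fst :=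
        fun w => by rw [← hBapp, ← hfapp]; exact hx w
      refine ⟨x.fst, x.snd, fun v => ?_, fun μ => ?_⟩
      · have h := key ((WithLp.equiv 2 (V × Q)).symm (v, 0))
        simpa using h
      · have h := key ((WithLp.equiv 2 (V × Q)).symm (0, μ))
        simpa using h
    refine ⟨(u0, l0), ⟨keyV, keyQ⟩, ?_⟩
    rintro ⟨u', l'⟩ ⟨h1, h2⟩
    have e1 : ∀ v : V, a (u' - u0) v - b (ι (l' - l0)) v = 0 := by
      intro v
      simp only [map_sub, LinearMap.sub_apply]
      linarith [h1 v, keyV v]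
    have e2 : ∀ μ : Q, b (ι μ) (u' - u0) + α * ⟪l' - l0, μ⟫ = 0 := by
      intro μ
      have hb' := keyQ μ
      have ha' := h2 μ
      simp only [map_sub, inner_sub_left]
      linarith
    have h3 := e1 (u' - u0)
    have h4 := e2 (l' - l0)
    have h6 : (⟪l' - l0, l' - l0⟫ : ℝ) = ‖l' - l0‖ ^ 2 := real_inner_self_eq_norm_sq _
    have h7 := ha_coer (u' - u0)
    have hdu : ‖u' - u0‖ ^ 2 ≤ 0 := by nlinarith [sq_nonneg ‖l' - l0‖]
    have hdl : ‖l' - l0‖ ^ 2 ≤ 0 := by nlinarith [sq_nonneg ‖u' - u0‖]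
    have hdu0 : u' - u0 = 0 := norm_eq_zero.mp
      (sq_eq_zero_iff.mp (le_antisymm hdu (sq_nonneg _)))
    have hdl0 : l' - l0 = 0 := norm_eq_zero.mp
      (sq_eq_zero_iff.mp (le_antisymm hdl (sq_nonneg _)))
    exact Prod.ext (sub_eq_zero.mp hdu0) (sub_eq_zero.mp hdl0)
  · -- the estimate
    intro u lam h1 h2
    have hFu : F u ≤ R * ‖u‖ := by
      have h := F.le_opNorm u
      rw [Real.norm_eq_abs] at h
      have h2 := le_abs_self (F u)
      nlinarith [norm_nonneg u]
    have heq1 : a u u - b (ι lam) u = F u := h1 u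
    have heq2 : b (ι lam) u + α * ⟪lam, lam⟫ = 0 := h2 lam
    have hil : (⟪lam, lam⟫ : ℝ) = ‖lam‖ ^ 2 := real_inner_self_eq_norm_sq lam
    have hsum : a u u + α * ‖lam‖ ^ 2 = F u := by rw [← hil]; linarith
    have hcu := ha_coer u
    have hu : ‖u‖ ≤ R / α₂ := by
      rcases eq_or_lt_of_le (norm_nonneg u) with h | h
      · rw [← h]; positivity
      · rw [le_div_iff₀ hα₂]
        nlinarith [sq_nonneg ‖lam‖]
    have hαlam : α * ‖lam‖ ^ 2 ≤ R ^ 2 / α₂ := by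
      have h5 : α * ‖lam‖ ^ 2 ≤ R * ‖u‖ := by nlinarith [sq_nonneg ‖u‖]
      calc α * ‖lam‖ ^ 2 ≤ R * ‖u‖ := h5
        _ ≤ R * (R / α₂) := by gcongr
        _ = R ^ 2 / α₂ := by ring
    have hlamΛ : ‖ι lam‖ ≤ (α₁ / α₂ + 1) / β * R := by
      rw [← sub_nonneg]
      by_contra hcon
      push_neg at hcon
      rw [sub_neg] at hcon
      have hεpos : 0 < (β * ‖ι lam‖ - β * ((α₁ / α₂ + 1) / β * R)) / 2 := by
        have : β * ((α₁ / α₂ + 1) / β * R) < β * ‖ι lam‖ := by gcongr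
        linarith
      obtain ⟨v, hv1, hv2⟩ := hb_infsup (ι lam) _ hεpos
      have hbv : b (ι lam) v = a u v - F v := by have := h1 v; linarith
      have hFv : -F v ≤ R := by
        have h := F.le_opNorm v
        rw [Real.norm_eq_abs] at h
        have h2' : -F v ≤ |F v| := neg_le_abs _
        calc -F v ≤ ‖F‖ * ‖v‖ := le_trans h2' h
          _ ≤ R * 1 := by gcongr
          _ = R := mul_one R
      have hav : a u v ≤ α₁ * (R / α₂) := by
        calc a u v ≤ α₁ * ‖u‖ * ‖v‖ := ha_cont u v
          _ ≤ α₁ * (R / α₂) * 1 := by gcongr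
          _ = α₁ * (R / α₂) := mul_one _
      have hchain : β * ‖ι lam‖ - (β * ‖ι lam‖ - β * ((α₁ / α₂ + 1) / β * R)) / 2
          ≤ α₁ * (R / α₂) + R := by
        calc _ ≤ b (ι lam) v := hv2
          _ = a u v - F v := hbv
          _ ≤ α₁ * (R / α₂) + R := by linarith
      have hβR : β * ((α₁ / α₂ + 1) / β * R) = α₁ * (R / α₂) + R := by
        field_simp
      have hmul := mul_lt_mul_of_pos_left hcon hβ
      linarith
    calc ‖u‖ ^ 2 + ‖ι lam‖ ^ 2 + α * ‖lam‖ ^ 2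
        ≤ (R / α₂) ^ 2 + ((α₁ / α₂ + 1) / β * R) ^ 2 + R ^ 2 / α₂ := by
          gcongr <;> first | exact norm_nonneg _ | skip
      _ = (1 / α₂ ^ 2 + ((α₁ / α₂ + 1) / β) ^ 2 + 1 / α₂) * R ^ 2 := by ring
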